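/- Fix r > 0 and ζ ∈ [0, 2π). Let w₁ := (1/√(1+r²))·(1, 0, r·cos ζ, r·sin ζ) and w₂ := (1/√(1+r²))·(0, 1, −r·sin ζ, r·cos ζ) in ℝ⁴, and let W := Span{w₁, w₂}. Then for every δ > 0 and every (x₁, x₂, y₁, y₂) ∈ ℝ⁴: the point (x₁, x₂, y₁, y₂) lies in the closed δ-neighborhood N_δ(W) of W if and only if (x₁, x₂) lies in the closed ball in ℝ² of radius δ·√(1+r²)/r centered at (1/r)·R_ζ(y₁, y₂), where R_ζ(y₁, y₂) := (y₁·cos ζ + y₂·sin ζ, −y₁·sin ζ + y₂·cos ζ). -/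

import Mathlib

open Metric Real

noncomputable section

/-- The point of `ℝ⁴` with coordinates `(a, b, c, d)`. -/
def pt4 (a b c d : ℝ) : EuclideanSpace ℝ (Fin 4) :=
  WithLp.toLp 2 (fun i : Fin 4 => if i = 0 then a else if i = 1 then b else if i = 2 then c else d)

/-- The point of `ℝ²` with coordinates `(a, b)`. -/
def pt2 (a b : ℝ) : EuclideanSpace ℝ (Fin 2) :=
  WithLp.toLp 2 (fun i : Fin 2 => if i = 0 then a else b)

/-- The vector `w₁ = (1/√(1+r²))·(1, 0, r cos ζ, r sin ζ)`. -/
def wvec₁ (r ζ : ℝ) : EuclideanSpace ℝ (Fin 4) :=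
  (Real.sqrt (1 + r ^ 2))⁻¹ • pt4 1 0 (r * Real.cos ζ) (r * Real.sin ζ)

/-- The vector `w₂ = (1/√(1+r²))·(0, 1, -r sin ζ, r cos ζ)`. -/
def wvec₂ (r ζ : ℝ) : EuclideanSpace ℝ (Fin 4) :=
  (Real.sqrt (1 + r ^ 2))⁻¹ • pt4 0 1 (-(r * Real.sin ζ)) (r * Real.cos ζ)

/-- The rotation `R_ζ(y₁, y₂) = (y₁ cos ζ + y₂ sin ζ, -y₁ sin ζ + y₂ cos ζ)` of `ℝ²`. -/
def rotPt (ζ y₁ y₂ : ℝ) : EuclideanSpace ℝ (Fin 2) :=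
  pt2 (y₁ * Real.cos ζ + y₂ * Real.sin ζ) (-(y₁ * Real.sin ζ) + y₂ * Real.cos ζ)

/-- Lemma A.2 of the paper: description of the `δ`-neighbourhood of the
plane `W = Span{w₁, w₂}` in terms of two-dimensional slices. -/
theorem statement15 (r ζ : ℝ) (hr : 0 < r) (hζ₀ : 0 ≤ ζ) (hζ₁ : ζ < 2 * π) :
    ∀ δ : ℝ, 0 < δ →
    ∀ x₁ x₂ y₁ y₂ : ℝ,
      pt4 x₁ x₂ y₁ y₂ ∈
          cthickening δ ((Submodule.span ℝ {wvec₁ r ζ, wvec₂ r ζ} :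
            Submodule ℝ (EuclideanSpace ℝ (Fin 4))) : Set (EuclideanSpace ℝ (Fin 4))) ↔
        pt2 x₁ x₂ ∈ closedBall (r⁻¹ • rotPt ζ y₁ y₂) (δ * Real.sqrt (1 + r ^ 2) / r) := by
  intro δ hδ x₁ x₂ y₁ y₂
  have hr' : r ≠ 0 := hr.ne'
  set c := Real.cos ζ with hc
  set s := Real.sin ζ with hs
  have hcs : c ^ 2 + s ^ 2 = 1 := by
    rw [hc, hs, add_comm]; exact Real.sin_sq_add_cos_sq ζ
  set q := Real.sqrt (1 + r ^ 2) with hqdef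
  have hq2 : q ^ 2 = 1 + r ^ 2 := Real.sq_sqrt (by positivity)
  have hq0 : 0 < q := Real.sqrt_pos.2 (by positivity)
  have hq' : q ≠ 0 := hq0.ne'
  set W := (Submodule.span ℝ {wvec₁ r ζ, wvec₂ r ζ} : Submodule ℝ (EuclideanSpace ℝ (Fin 4)))
    with hW
  have hne : (W : Set (EuclideanSpace ℝ (Fin 4))).Nonempty := ⟨0, W.zero_mem⟩
  set p := pt4 x₁ x₂ y₁ y₂ with hp
  -- membership in cthickening ↔ infDist ≤ δ
  have hmem : p ∈ cthickening δ (W : Set (EuclideanSpace ℝ (Fin 4))) ↔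
      infDist p (W : Set (EuclideanSpace ℝ (Fin 4))) ≤ δ := by
    rw [mem_cthickening_iff, infDist,
      ← ENNReal.le_ofReal_iff_toReal_le (infEdist_ne_top hne) hδ.le]
  -- the two-dimensional quantities
  set A := x₁ - (y₁ * c + y₂ * s) / r with hA
  set B := x₂ - (-(y₁ * s) + y₂ * c) / r with hB
  have hd2 : dist (pt2 x₁ x₂) (r⁻¹ • rotPt ζ y₁ y₂) = Real.sqrt (A ^ 2 + B ^ 2) := by
    rw [EuclideanSpace.dist_eq]
    congr 1
    rw [Fin.sum_univ_two]
    have h0 : (r⁻¹ • rotPt ζ y₁ y₂) 0 = r⁻¹ * (y₁ * c + y₂ * s) := rfl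
    have h1 : (r⁻¹ • rotPt ζ y₁ y₂) 1 = r⁻¹ * (-(y₁ * s) + y₂ * c) := rfl
    have h0' : pt2 x₁ x₂ 0 = x₁ := rfl
    have h1' : pt2 x₁ x₂ 1 = x₂ := rfl
    rw [h0, h1, h0', h1', Real.dist_eq, Real.dist_eq, sq_abs, sq_abs, hA, hB]
    rw [div_eq_inv_mul, div_eq_inv_mul]
  -- squared distance (times q²) from p to a generic point of W
  have key : ∀ a b : ℝ, dist p (a • wvec₁ r ζ + b • wvec₂ r ζ) ^ 2 * q ^ 2 =
      (q * x₁ - a) ^ 2 + (q * x₂ - b) ^ 2 +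
      (q * y₁ - (a * (r * c) - b * (r * s))) ^ 2 +
      (q * y₂ - (a * (r * s) + b * (r * c))) ^ 2 := by
    intro a b
    rw [EuclideanSpace.dist_eq, Real.sq_sqrt (by positivity)]
    rw [Fin.sum_univ_four]
    have e0 : (a • wvec₁ r ζ + b • wvec₂ r ζ) 0 = a * q⁻¹ := by
      show a * (q⁻¹ * 1) + b * (q⁻¹ * 0) = _; ring
    have e1 : (a • wvec₁ r ζ + b • wvec₂ r ζ) 1 = b * q⁻¹ := by
      show a * (q⁻¹ * 0) + b * (q⁻¹ * 1) = _; ring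
    have e2 : (a • wvec₁ r ζ + b • wvec₂ r ζ) 2 = (a * (r * c) - b * (r * s)) * q⁻¹ := by
      show a * (q⁻¹ * (r * c)) + b * (q⁻¹ * (-(r * s))) = _; ring
    have e3 : (a • wvec₁ r ζ + b • wvec₂ r ζ) 3 = (a * (r * s) + b * (r * c)) * q⁻¹ := by
      show a * (q⁻¹ * (r * s)) + b * (q⁻¹ * (r * c)) = _; ring
    have p0 : p 0 = x₁ := rfl
    have p1 : p 1 = x₂ := rfl
    have p2 : p 2 = y₁ := rfl
    have p3 : p 3 = y₂ := rfl
    rw [e0, e1, e2, e3, p0, p1, p2, p3, Real.dist_eq, Real.dist_eq, Real.dist_eq, Real.dist_eq,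
      sq_abs, sq_abs, sq_abs, sq_abs]
    field_simp
  -- the central algebraic identity
  have hident : ∀ a b : ℝ,
      (q * x₁ - a) ^ 2 + (q * x₂ - b) ^ 2 +
      (q * y₁ - (a * (r * c) - b * (r * s))) ^ 2 +
      (q * y₂ - (a * (r * s) + b * (r * c))) ^ 2 =
      (r * A) ^ 2 + (r * B) ^ 2 + (q * a - (x₁ + r * (c * y₁ + s * y₂))) ^ 2 +
        (q * b - (x₂ + r * (-(s * y₁) + c * y₂))) ^ 2 := by
    intro a b
    have hrA : r * A = r * x₁ - (y₁ * c + y₂ * s) := by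
      rw [hA]; field_simp
    have hrB : r * B = r * x₂ - (-(y₁ * s) + y₂ * c) := by
      rw [hB]; field_simp
    rw [hrA, hrB]
    linear_combination (x₁ ^ 2 + x₂ ^ 2 + y₁ ^ 2 + y₂ ^ 2 - a ^ 2 - b ^ 2) * hq2 +
      (r ^ 2 * (a ^ 2 + b ^ 2) - (1 + r ^ 2) * (y₁ ^ 2 + y₂ ^ 2)) * hcs
  have hrA2 : (r * A) ^ 2 + (r * B) ^ 2 = r ^ 2 * (A ^ 2 + B ^ 2) := by ring
  rw [hmem, mem_closedBall, hd2]
  constructor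
  · -- infDist ≤ δ → √(A²+B²) ≤ δ q / r
    intro h
    have hlow : r / q * Real.sqrt (A ^ 2 + B ^ 2) ≤
        infDist p (W : Set (EuclideanSpace ℝ (Fin 4))) := by
      by_contra hcon
      push_neg at hcon
      obtain ⟨w, hwW, hwlt⟩ := (infDist_lt_iff hne).1 hcon
      obtain ⟨a, b, rfl⟩ := Submodule.mem_span_pair.1 hwW
      have hge : r / q * Real.sqrt (A ^ 2 + B ^ 2) ≤
          dist p (a • wvec₁ r ζ + b • wvec₂ r ζ) := by
        have hk := (key a b).trans (hident a b)
        have hsq : (r / q * Real.sqrt (A ^ 2 + B ^ 2)) ^ 2 ≤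
            dist p (a • wvec₁ r ζ + b • wvec₂ r ζ) ^ 2 := by
          rw [mul_pow, div_pow, Real.sq_sqrt (show (0:ℝ) ≤ A ^ 2 + B ^ 2 from by positivity),
            div_mul_eq_mul_div, div_le_iff₀ (by positivity : (0:ℝ) < q ^ 2), ← hrA2]
          linarith [sq_nonneg (q * a - (x₁ + r * (c * y₁ + s * y₂))),
            sq_nonneg (q * b - (x₂ + r * (-(s * y₁) + c * y₂))), hk]
        have h1 : 0 ≤ r / q * Real.sqrt (A ^ 2 + B ^ 2) := by positivity
        calc r / q * Real.sqrt (A ^ 2 + B ^ 2)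
            = Real.sqrt ((r / q * Real.sqrt (A ^ 2 + B ^ 2)) ^ 2) := (Real.sqrt_sq h1).symm
          _ ≤ Real.sqrt (dist p (a • wvec₁ r ζ + b • wvec₂ r ζ) ^ 2) := Real.sqrt_le_sqrt hsq
          _ = dist p (a • wvec₁ r ζ + b • wvec₂ r ζ) := Real.sqrt_sq dist_nonneg
      exact absurd hwlt (not_lt.2 hge)
    have hfin : r / q * Real.sqrt (A ^ 2 + B ^ 2) ≤ δ := hlow.trans h
    rw [div_mul_eq_mul_div, div_le_iff₀ hq0] at hfin
    rw [le_div_iff₀ hr, mul_comm (Real.sqrt _) r]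
    linarith [hfin]
  · -- √(A²+B²) ≤ δ q / r → infDist ≤ δ
    intro h
    set a₀ := (x₁ + r * (c * y₁ + s * y₂)) / q with ha₀
    set b₀ := (x₂ + r * (-(s * y₁) + c * y₂)) / q with hb₀
    have hwmem : a₀ • wvec₁ r ζ + b₀ • wvec₂ r ζ ∈ W :=
      Submodule.mem_span_pair.2 ⟨a₀, b₀, rfl⟩
    refine le_trans (infDist_le_dist_of_mem hwmem) ?_
    have hqa : q * a₀ - (x₁ + r * (c * y₁ + s * y₂)) = 0 := by
      rw [ha₀]; field_simp; ring
    have hqb : q * b₀ - (x₂ + r * (-(s * y₁) + c * y₂)) = 0 := by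
      rw [hb₀]; field_simp; ring
    have hk := (key a₀ b₀).trans (hident a₀ b₀)
    rw [hqa, hqb] at hk
    have hsq : dist p (a₀ • wvec₁ r ζ + b₀ • wvec₂ r ζ) ^ 2 =
        (r / q * Real.sqrt (A ^ 2 + B ^ 2)) ^ 2 := by
      rw [mul_pow, div_pow, Real.sq_sqrt (show (0:ℝ) ≤ A ^ 2 + B ^ 2 from by positivity),
        div_mul_eq_mul_div, eq_div_iff (by positivity : (q:ℝ) ^ 2 ≠ 0)]
      linear_combination hk
    have hdist : dist p (a₀ • wvec₁ r ζ + b₀ • wvec₂ r ζ) =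
        r / q * Real.sqrt (A ^ 2 + B ^ 2) := by
      have h2 : (0:ℝ) ≤ r / q * Real.sqrt (A ^ 2 + B ^ 2) := by positivity
      calc dist p (a₀ • wvec₁ r ζ + b₀ • wvec₂ r ζ)
          = Real.sqrt (dist p (a₀ • wvec₁ r ζ + b₀ • wvec₂ r ζ) ^ 2) :=
            (Real.sqrt_sq dist_nonneg).symm
        _ = Real.sqrt ((r / q * Real.sqrt (A ^ 2 + B ^ 2)) ^ 2) := by rw [hsq]
        _ = r / q * Real.sqrt (A ^ 2 + B ^ 2) := Real.sqrt_sq h2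
    rw [hdist]
    calc r / q * Real.sqrt (A ^ 2 + B ^ 2) ≤ r / q * (δ * q / r) := by
          apply mul_le_mul_of_nonneg_left h (by positivity)
      _ = δ := by field_simp
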